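/- Let (Ω, P) be a probability space, M a positive integer, λ_1, …, λ_M ∈ [0,1] real numbers with ∑_{b=1}^M λ_b ≤ 1, and r_1 ≥ r_2 ≥ … ≥ r_M ≥ 0 real numbers. Let B_1, …, B_M : Ω → {0,1} be independent random variables with P(B_b = 1) = λ_b for each b. Define the first-success reward R : Ω → ℝ by R(ω) = r_β where β = β(ω) is the least index b with B_b(ω) = 1, and R(ω) = 0 if B_b(ω) = 0 for all b. Then E[R] ≥ (1 − 1/e) · ∑_{b=1}^M r_b · λ_b. -/

import Mathlib

open MeasureTheory ProbabilityTheory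

section Aux

open Finset

private lemma stmt3_tele (L : ℕ → ℝ) (n : ℕ) :
    ∑ i ∈ range n, L i * ∏ j ∈ range i, (1 - L j)
      = 1 - ∏ i ∈ range n, (1 - L i) := by
  induction n with
  | zero => simp
  | succ n ih => rw [sum_range_succ, prod_range_succ, ih]; ring

private lemma stmt3_prod_le_exp (L : ℕ → ℝ) (hL0 : ∀ i, 0 ≤ L i) (hL1 : ∀ i, L i ≤ 1)
    (n : ℕ) :
    ∏ i ∈ range n, (1 - L i) ≤ Real.exp (-(∑ i ∈ range n, L i)) := by
  have h : Real.exp (-(∑ i ∈ range n, L i)) = ∏ i ∈ range n, Real.exp (-(L i)) := by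
    rw [← Real.exp_sum, ← Finset.sum_neg_distrib]
  rw [h]
  apply Finset.prod_le_prod
  · intro i _; linarith [hL1 i]
  · intro i _; linarith [Real.add_one_le_exp (-(L i))]

private lemma stmt3_conv_bound (s : ℝ) (h0 : 0 ≤ s) (h1 : s ≤ 1) :
    (1 - 1 / Real.exp 1) * s ≤ 1 - Real.exp (-s) := by
  have hc : Real.exp (s • (-1 : ℝ) + (1 - s) • (0 : ℝ))
      ≤ s • Real.exp (-1 : ℝ) + (1 - s) • Real.exp (0 : ℝ) :=
    convexOn_exp.2 (Set.mem_univ (-1 : ℝ)) (Set.mem_univ (0 : ℝ)) h0 (by linarith) (by ring)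
  simp only [smul_eq_mul, mul_neg, mul_one, mul_zero, add_zero, Real.exp_zero] at hc
  rw [show Real.exp (-1 : ℝ) = (Real.exp 1)⁻¹ from Real.exp_neg 1] at hc
  have hepos : (0:ℝ) < Real.exp 1 := Real.exp_pos 1
  rw [one_div]
  nlinarith [hc]

private lemma stmt3_abel_id (f x : ℕ → ℝ) (N : ℕ) :
    ∑ i ∈ range N, f i * x i
      = ∑ i ∈ range N, (f i - f (i+1)) * (∑ j ∈ range (i+1), x j)
        + f N * (∑ j ∈ range N, x j) := by
  induction N with
  | zero => simp
  | succ N ih =>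
    rw [sum_range_succ (f := fun i => f i * x i), ih,
      sum_range_succ (f := fun i => (f i - f (i+1)) * (∑ j ∈ range (i+1), x j)),
      sum_range_succ (f := x)]
    ring

private lemma stmt3_abel_ineq (f x y : ℕ → ℝ) (c : ℝ) (N : ℕ)
    (hf_anti : ∀ i, f (i+1) ≤ f i) (hf0 : 0 ≤ f N)
    (hxy : ∀ n, n ≤ N → c * ∑ j ∈ range n, y j ≤ ∑ j ∈ range n, x j) :
    c * ∑ i ∈ range N, f i * y i ≤ ∑ i ∈ range N, f i * x i := by
  rw [stmt3_abel_id f x N, stmt3_abel_id f y N, mul_add]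
  apply add_le_add
  · rw [Finset.mul_sum]
    apply Finset.sum_le_sum
    intro i hi
    have h := hxy (i+1) (Nat.succ_le_of_lt (Finset.mem_range.mp hi))
    have hnn : 0 ≤ f i - f (i+1) := by linarith [hf_anti i]
    calc c * ((f i - f (i+1)) * ∑ j ∈ range (i+1), y j)
        = (f i - f (i+1)) * (c * ∑ j ∈ range (i+1), y j) := by ring
      _ ≤ (f i - f (i+1)) * ∑ j ∈ range (i+1), x j := mul_le_mul_of_nonneg_left h hnn
  · calc c * (f N * ∑ j ∈ range N, y j)
        = f N * (c * ∑ j ∈ range N, y j) := by ring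
      _ ≤ f N * ∑ j ∈ range N, x j := mul_le_mul_of_nonneg_left (hxy N le_rfl) hf0

private lemma stmt3_analytic (L f : ℕ → ℝ) (N : ℕ)
    (hL0 : ∀ i, 0 ≤ L i) (hL1 : ∀ i, L i ≤ 1)
    (hsum : ∑ i ∈ range N, L i ≤ 1)
    (hf : ∀ i, f (i+1) ≤ f i) (hfN : 0 ≤ f N) :
    (1 - 1 / Real.exp 1) * ∑ i ∈ range N, f i * L i
      ≤ ∑ i ∈ range N, f i * (L i * ∏ j ∈ range i, (1 - L j)) := by
  apply stmt3_abel_ineq f _ L _ N hf hfN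
  intro n hn
  have hs1 : ∑ j ∈ range n, L j ≤ 1 :=
    le_trans (Finset.sum_le_sum_of_subset_of_nonneg
      (Finset.range_subset_range.mpr hn) (fun i _ _ => hL0 i)) hsum
  have hs0 : 0 ≤ ∑ j ∈ range n, L j := Finset.sum_nonneg fun i _ => hL0 i
  rw [stmt3_tele]
  calc (1 - 1 / Real.exp 1) * ∑ j ∈ range n, L j
      ≤ 1 - Real.exp (-(∑ j ∈ range n, L j)) := stmt3_conv_bound _ hs0 hs1
    _ ≤ 1 - ∏ j ∈ range n, (1 - L j) := by
        linarith [stmt3_prod_le_exp L hL0 hL1 n]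

end Aux

theorem stmt_3 {Ω : Type*} [MeasurableSpace Ω] (P : Measure Ω) [IsProbabilityMeasure P]
    (M : ℕ) (hM : 0 < M) (l r : Fin M → ℝ)
    (hl0 : ∀ b, 0 ≤ l b) (hl1 : ∀ b, l b ≤ 1)
    (hsum : ∑ b, l b ≤ 1)
    (hr_mono : ∀ i j : Fin M, i ≤ j → r j ≤ r i)
    (hr_nonneg : ∀ b, 0 ≤ r b)
    (B : Fin M → Ω → Bool)
    (hBmeas : ∀ b, Measurable (B b))
    (hBindep : iIndepFun B P)
    (hBlaw : ∀ b, P {ω | B b ω = true} = ENNReal.ofReal (l b))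
    (R : Ω → ℝ)
    (hR : ∀ ω, R ω =
      if h : (Finset.univ.filter fun b => B b ω = true).Nonempty then
        r ((Finset.univ.filter fun b => B b ω = true).min' h)
      else 0) :
    (1 - 1 / Real.exp 1) * ∑ b, r b * l b ≤ ∫ ω, R ω ∂P := by
  classical
  set S : Fin M → Set Ω := fun b => B b ⁻¹' {true} with hSdef
  have hSmeas : ∀ b, MeasurableSet (S b) := fun b => (hBmeas b) (by trivial)
  have hPS : ∀ b, P (S b) = ENNReal.ofReal (l b) := by
    intro b
    rw [← hBlaw b]
    congr 1
  set A : Fin M → Set Ω := fun b => ⋂ i ∈ Finset.Iic b, (if i = b then S i else (S i)ᶜ)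
    with hAdef
  have hAmeas : ∀ b, MeasurableSet (A b) := by
    intro b
    apply Finset.measurableSet_biInter
    intro i _
    split
    · exact hSmeas i
    · exact (hSmeas i).compl
  have hPA : ∀ b, P (A b) = ENNReal.ofReal (l b * ∏ i ∈ Finset.Iio b, (1 - l i)) := by
    intro b
    have hprod := hBindep.meas_biInter (S := Finset.Iic b)
      (s := fun i => if i = b then S i else (S i)ᶜ) ?_
    · rw [hAdef]
      simp only []
      rw [hprod]
      rw [show Finset.Iic b = insert b (Finset.Iio b) from (Finset.Iio_insert b).symm]
      rw [Finset.prod_insert (by simp)]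
      rw [if_pos rfl, hPS b]
      have hfac : ∀ i ∈ Finset.Iio b, P (if i = b then S i else (S i)ᶜ)
          = ENNReal.ofReal (1 - l i) := by
        intro i hi
        rw [if_neg (Finset.mem_Iio.mp hi).ne]
        rw [measure_compl (hSmeas i) (measure_ne_top P _), hPS i]
        rw [measure_univ, ← ENNReal.ofReal_one, ← ENNReal.ofReal_sub _ (hl0 i)]
      rw [Finset.prod_congr rfl hfac, ← ENNReal.ofReal_prod_of_nonneg
        (fun i _ => by linarith [hl1 i]), ← ENNReal.ofReal_mul (hl0 b)]
    · intro i _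
      split
      · exact ⟨{true}, trivial, rfl⟩
      · exact ⟨{true}ᶜ, trivial, (Set.preimage_compl).symm⟩
  have hmemA : ∀ b ω, ω ∈ A b ↔ (B b ω = true ∧ ∀ i, i < b → ¬(B i ω = true)) := by
    intro b ω
    rw [hAdef]
    simp only [Set.mem_iInter]
    constructor
    · intro hb
      refine ⟨?_, ?_⟩
      · have := hb b (Finset.mem_Iic.mpr le_rfl)
        simpa [hSdef] using this
      · intro i hib hc
        have := hb i (Finset.mem_Iic.mpr hib.le)
        rw [if_neg hib.ne] at this
        exact this hc
    · rintro ⟨h1, h2⟩ i hi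
      rcases eq_or_lt_of_le (Finset.mem_Iic.mp hi) with rfl | hlt
      · rw [if_pos rfl]; exact h1
      · rw [if_neg hlt.ne]; exact fun hc => h2 i hlt hc
  have hRsum : ∀ ω, R ω = ∑ b, (A b).indicator (fun _ => r b) ω := by
    intro ω
    rw [hR ω]
    by_cases h : (Finset.univ.filter fun b => B b ω = true).Nonempty
    · rw [dif_pos h]
      set β := (Finset.univ.filter fun b => B b ω = true).min' h with hβ
      have hkey : ∀ b, ω ∈ A b ↔ b = β := by
        intro b
        rw [hmemA]
        constructor
        · rintro ⟨h1, h2⟩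
          have hbF : b ∈ Finset.univ.filter (fun b => B b ω = true) := by
            simp [h1]
          refine le_antisymm ?_ (Finset.min'_le _ b hbF)
          by_contra hlt
          push_neg at hlt
          have hβF := Finset.min'_mem (Finset.univ.filter fun b => B b ω = true) h
          rw [Finset.mem_filter] at hβF
          exact h2 β hlt hβF.2
        · rintro rfl
          have hβF := Finset.min'_mem (Finset.univ.filter fun b => B b ω = true) h
          rw [Finset.mem_filter] at hβF
          refine ⟨hβF.2, ?_⟩
          intro i hi hc
          have hiF : i ∈ Finset.univ.filter (fun b => B b ω = true) := by simp [hc]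
          exact absurd (Finset.min'_le _ i hiF) (not_le.mpr hi)
      have heach : ∀ b, (A b).indicator (fun _ => r b) ω = if b = β then r b else 0 := by
        intro b
        by_cases hb : b = β
        · rw [if_pos hb, Set.indicator_of_mem ((hkey b).mpr hb)]
        · rw [if_neg hb, Set.indicator_of_notMem (fun hc => hb ((hkey b).mp hc))]
      rw [Finset.sum_congr rfl (fun b _ => heach b)]
      simp
    · rw [dif_neg h]
      symm
      apply Finset.sum_eq_zero
      intro b _
      apply Set.indicator_of_notMem
      intro hc
      exact h ⟨b, by simp [((hmemA b ω).mp hc).1]⟩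
  have hInt : ∫ ω, R ω ∂P = ∑ b, r b * (l b * ∏ i ∈ Finset.Iio b, (1 - l i)) := by
    calc ∫ ω, R ω ∂P = ∫ ω, ∑ b, (A b).indicator (fun _ => r b) ω ∂P :=
          integral_congr_ae (Filter.Eventually.of_forall hRsum)
      _ = ∑ b, ∫ ω, (A b).indicator (fun _ => r b) ω ∂P :=
          integral_finset_sum _ (fun b _ => (integrable_const (r b)).indicator (hAmeas b))
      _ = ∑ b, r b * (l b * ∏ i ∈ Finset.Iio b, (1 - l i)) := by
          apply Finset.sum_congr rfl
          intro b _
          rw [integral_indicator_const _ (hAmeas b), measureReal_def, hPA b, smul_eq_mul,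
            ENNReal.toReal_ofReal, mul_comm]
          exact mul_nonneg (hl0 b) (Finset.prod_nonneg fun i _ => by linarith [hl1 i])
  rw [hInt]
  -- transfer to ℕ
  set L : ℕ → ℝ := fun i => if h : i < M then l ⟨i, h⟩ else 0 with hLdef
  set F : ℕ → ℝ := fun i => if h : i < M then r ⟨i, h⟩ else 0 with hFdef
  have hLb : ∀ b : Fin M, L ↑b = l b := by
    intro b; simp [hLdef, b.isLt]
  have hFb : ∀ b : Fin M, F ↑b = r b := by
    intro b; simp [hFdef, b.isLt]
  have hprodeq : ∀ b : Fin M,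
      ∏ i ∈ Finset.Iio b, (1 - l i) = ∏ j ∈ Finset.range ↑b, (1 - L j) := by
    intro b
    rw [show Finset.range (b : ℕ) = Finset.Iio (b : ℕ) from (Nat.Iio_eq_range _).symm,
      ← Fin.map_valEmbedding_Iio, Finset.prod_map]
    apply Finset.prod_congr rfl
    intro i _
    rw [Fin.valEmbedding_apply, hLb i]
  have e1 : ∑ b, r b * l b = ∑ i ∈ Finset.range M, F i * L i := by
    rw [← Fin.sum_univ_eq_sum_range (fun i => F i * L i) M]
    exact Finset.sum_congr rfl fun b _ => by rw [hFb b, hLb b]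
  have e2 : ∑ b, r b * (l b * ∏ i ∈ Finset.Iio b, (1 - l i))
      = ∑ i ∈ Finset.range M, F i * (L i * ∏ j ∈ Finset.range i, (1 - L j)) := by
    rw [← Fin.sum_univ_eq_sum_range (fun i => F i * (L i * ∏ j ∈ Finset.range i, (1 - L j))) M]
    exact Finset.sum_congr rfl fun b _ => by rw [hFb b, hLb b, hprodeq b]
  rw [e1, e2]
  apply stmt3_analytic
  · intro i
    rw [hLdef]
    dsimp only
    split
    · exact hl0 _
    · exact le_refl 0
  · intro i
    rw [hLdef]
    dsimp only
    split
    · exact hl1 _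
    · exact zero_le_one
  · rw [← Fin.sum_univ_eq_sum_range L M]
    calc ∑ b : Fin M, L ↑b = ∑ b, l b := Finset.sum_congr rfl fun b _ => hLb b
      _ ≤ 1 := hsum
  · intro i
    rw [hFdef]
    dsimp only
    by_cases h1 : i + 1 < M
    · rw [dif_pos h1, dif_pos (Nat.lt_of_succ_lt h1)]
      exact hr_mono ⟨i, _⟩ ⟨i+1, h1⟩ (by simp [Fin.mk_le_mk])
    · rw [dif_neg h1]
      split
      · exact hr_nonneg _
      · exact le_refl 0
  · rw [hFdef]
    dsimp only
    rw [dif_neg (lt_irrefl M)]
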